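/- arXiv:1407.3317 — 3 statements merged into one kernel-verified Lean document; each statement's English description precedes it below -/
import Mathlib

section
/- For every (t̄, r̄) ∈ ℝ² one has cos ψ(t̄, r̄) − cos T(t̄, r̄) = (t̄² − r̄²)·(cos ψ(t̄, r̄) + cos T(t̄, r̄)). Consequently, for the Milne point (t̄, r̄) = (t·cosh χ, t·sinh χ) with t > 0 and χ ∈ ℝ, the Milne time coordinate is recovered as t = √((cos ψ − cos T)/(cos ψ + cos T)). -/
/-- The compactified time coordinate `T(t̄, r̄) = arctan(t̄ + r̄) + arctan(t̄ − r̄)`. -/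
noncomputable def Tcoord (p : ℝ × ℝ) : ℝ :=
  Real.arctan (p.1 + p.2) + Real.arctan (p.1 - p.2)

/-- The compactified radial coordinate `ψ(t̄, r̄) = arctan(t̄ + r̄) − arctan(t̄ − r̄)`. -/
noncomputable def psiCoord (p : ℝ × ℝ) : ℝ :=
  Real.arctan (p.1 + p.2) - Real.arctan (p.1 - p.2)

/-- The Milne comoving coordinate map `F(t, χ) = (t·cosh χ, t·sinh χ)`. -/
noncomputable def milneMap (p : ℝ × ℝ) : ℝ × ℝ :=
  (p.1 * Real.cosh p.2, p.1 * Real.sinh p.2)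

lemma key_identity (p : ℝ × ℝ) :
    Real.cos (psiCoord p) - Real.cos (Tcoord p)
      = (p.1 ^ 2 - p.2 ^ 2) * (Real.cos (psiCoord p) + Real.cos (Tcoord p)) := by
  have hu : Real.sqrt (1 + (p.1 + p.2) ^ 2) ≠ 0 := by positivity
  have hv : Real.sqrt (1 + (p.1 - p.2) ^ 2) ≠ 0 := by positivity
  simp only [psiCoord, Tcoord, Real.cos_add, Real.cos_sub, Real.sin_arctan, Real.cos_arctan]
  field_simp
  ring

lemma sum_pos (p : ℝ × ℝ) :
    0 < Real.cos (psiCoord p) + Real.cos (Tcoord p) := by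
  have hu : (0:ℝ) < Real.sqrt (1 + (p.1 + p.2) ^ 2) := by positivity
  have hv : (0:ℝ) < Real.sqrt (1 + (p.1 - p.2) ^ 2) := by positivity
  simp only [psiCoord, Tcoord, Real.cos_add, Real.cos_sub, Real.cos_arctan]
  have hA : (0:ℝ) < 1 / Real.sqrt (1 + (p.1 + p.2) ^ 2) * (1 / Real.sqrt (1 + (p.1 - p.2) ^ 2)) := by
    positivity
  linarith

/-- `cos ψ − cos T = (t̄² − r̄²)·(cos ψ + cos T)`; consequently at the Milne point
`(t·cosh χ, t·sinh χ)` with `t > 0`, `t = √((cos ψ − cos T)/(cos ψ + cos T))`. -/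
theorem milne_time_from_conformal :
    (∀ p : ℝ × ℝ,
      Real.cos (psiCoord p) - Real.cos (Tcoord p)
        = (p.1 ^ 2 - p.2 ^ 2) * (Real.cos (psiCoord p) + Real.cos (Tcoord p))) ∧
    (∀ t χ : ℝ, 0 < t →
      t = Real.sqrt
        ((Real.cos (psiCoord (milneMap (t, χ))) - Real.cos (Tcoord (milneMap (t, χ))))
          / (Real.cos (psiCoord (milneMap (t, χ))) + Real.cos (Tcoord (milneMap (t, χ)))))) := by
  refine ⟨key_identity, fun t χ ht => ?_⟩
  set p := milneMap (t, χ) with hp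
  have hS := sum_pos p
  have hsq : p.1 ^ 2 - p.2 ^ 2 = t ^ 2 := by
    have h := Real.cosh_sq_sub_sinh_sq χ
    simp only [hp, milneMap]
    nlinarith [h]
  rw [key_identity p, hsq, mul_div_assoc, div_self hS.ne', mul_one, Real.sqrt_sq ht.le]
end

section
/- For every (t̄, r̄) ∈ ℝ² one has t̄·sin ψ(t̄, r̄) = r̄·sin T(t̄, r̄). Consequently, for the Milne point (t̄, r̄) = (t·cosh χ, t·sinh χ) with t > 0 and χ ∈ ℝ, whenever sin T(t̄, r̄) ≠ 0 the Milne radial coordinate is recovered through tanh χ = sin ψ(t̄, r̄)/sin T(t̄, r̄). -/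
lemma key (p : ℝ × ℝ) : p.1 * Real.sin (psiCoord p) = p.2 * Real.sin (Tcoord p) := by
  unfold psiCoord Tcoord
  rw [Real.sin_add, Real.sin_sub, Real.sin_arctan, Real.cos_arctan,
    Real.sin_arctan, Real.cos_arctan]
  have h1 : Real.sqrt (1 + (p.1 + p.2) ^ 2) ≠ 0 := by positivity
  have h2 : Real.sqrt (1 + (p.1 - p.2) ^ 2) ≠ 0 := by positivity
  field_simp
  ring

/-- `t̄·sin ψ = r̄·sin T`; consequently at the Milne point `(t·cosh χ, t·sinh χ)` with
`t > 0`, whenever `sin T ≠ 0` one recovers `tanh χ = sin ψ / sin T`. -/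
theorem milne_radial_from_conformal :
    (∀ p : ℝ × ℝ, p.1 * Real.sin (psiCoord p) = p.2 * Real.sin (Tcoord p)) ∧
    (∀ t χ : ℝ, 0 < t →
      Real.sin (Tcoord (milneMap (t, χ))) ≠ 0 →
      Real.tanh χ
        = Real.sin (psiCoord (milneMap (t, χ))) / Real.sin (Tcoord (milneMap (t, χ)))) := by
  refine ⟨key, ?_⟩
  intro t χ ht hT
  have hk := key (milneMap (t, χ))
  simp only [milneMap] at hk hT ⊢
  have hc : Real.cosh χ ≠ 0 := (Real.cosh_pos χ).ne'
  have ht' : t ≠ 0 := ne_of_gt ht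
  rw [Real.tanh_eq_sinh_div_cosh, div_eq_div_iff hc hT]
  have h : t * (Real.sinh χ * Real.sin (Tcoord (t * Real.cosh χ, t * Real.sinh χ)))
      = t * (Real.sin (psiCoord (t * Real.cosh χ, t * Real.sinh χ)) * Real.cosh χ) := by
    nlinarith [hk]
  exact mul_left_cancel₀ ht' h
end

section
/- Let X : Fin 2 → Fin 2 → Fin 2 → Fin 2 → ℂ satisfy the symmetries X_{ABCD} = X_{BACD} and X_{ABCD} = X_{ABDC} (these are the symmetries of the reduced curvature spinor of a metric, not necessarily torsion-free, connection). Define: Ψ_{ABCD} = X_{(ABCD)}, the full symmetrization of X (the average of X over all 24 permutations of its four arguments); Λ = (1/6)·Σ_{A,B,E,F} ε^{AE} ε^{BF} X_{ABEF}; and H_{BC} = (1/2)·Σ_{A,E} ε^{AE} (X_{ABCE} + X_{ACBE}). Then for all A, B, C, D ∈ Fin 2: X_{ABCD} = Ψ_{ABCD} + Λ·(ε_{AC}ε_{BD} + ε_{AD}ε_{BC}) + (1/4)·(ε_{AC}H_{DB} + ε_{AD}H_{CB}) + (1/4)·(ε_{BC}H_{DA} + ε_{BD}H_{CA}); moreover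 H_{BC} = H_{CB}. (This is the decomposition X_{ABCD} = Ψ_{ABCD} + Λ(ε_{AC}ε_{BD} + ε_{AD}ε_{BC}) + (1/2)ε_{A(C}H_{D)B} + (1/2)ε_{B(C}H_{D)A} of the curvature spinor into the Weyl part Ψ, the scalar part Λ with 6Λ = X_{AB}{}^{AB}, and the torsion-induced part H_{BC} = X_{A(BC)}{}^{A}; for a Levi-Civita connection H vanishes.) -/
/-- The antisymmetric ε-spinor: `ε₀₁ = 1`, `ε₁₀ = −1`, `ε₀₀ = ε₁₁ = 0`.
The raised version `ε^{AB}` has the same components. -/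
def epsSpinor : Fin 2 → Fin 2 → ℂ := fun A B =>
  if A = 0 ∧ B = 1 then 1 else if A = 1 ∧ B = 0 then -1 else 0

/-- The totally symmetric (Weyl) part `Ψ_{ABCD} = X_{(ABCD)}`: the average of `X` over
all 24 permutations of its four arguments. -/
noncomputable def weylPart (X : Fin 2 → Fin 2 → Fin 2 → Fin 2 → ℂ)
    (A B C D : Fin 2) : ℂ :=
  (1 / 24) * ∑ σ : Equiv.Perm (Fin 4),
    X (![A, B, C, D] (σ 0)) (![A, B, C, D] (σ 1)) (![A, B, C, D] (σ 2)) (![A, B, C, D] (σ 3))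

/-- The scalar part `Λ`, with `6Λ = X_{AB}{}^{AB} = ε^{AE}ε^{BF}X_{ABEF}`. -/
noncomputable def lambdaPart (X : Fin 2 → Fin 2 → Fin 2 → Fin 2 → ℂ) : ℂ :=
  (1 / 6) * ∑ A, ∑ B, ∑ E, ∑ F, epsSpinor A E * epsSpinor B F * X A B E F

/-- The torsion-induced part `H_{BC} = X_{A(BC)}{}^{A}
  = (1/2)·ε^{AE}(X_{ABCE} + X_{ACBE})`. -/
noncomputable def hPart (X : Fin 2 → Fin 2 → Fin 2 → Fin 2 → ℂ) (B C : Fin 2) : ℂ :=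
  (1 / 2) * ∑ A, ∑ E, epsSpinor A E * (X A B C E + X A C B E)

private lemma eps00 : epsSpinor 0 0 = 0 := rfl
private lemma eps01 : epsSpinor 0 1 = 1 := rfl
private lemma eps10 : epsSpinor 1 0 = -1 := rfl
private lemma eps11 : epsSpinor 1 1 = 0 := rfl

private lemma finAux1 : (1 : Fin 4) = Fin.succ 0 := rfl
private lemma finAux2 : (2 : Fin 4) = Fin.succ 1 := rfl
private lemma finAux3 : (3 : Fin 4) = Fin.succ 2 := rfl
private lemma finAux4 : (1 : Fin 3) = Fin.succ 0 := rfl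
private lemma finAux5 : (2 : Fin 3) = Fin.succ 1 := rfl
private lemma finAux6 : (1 : Fin 2) = Fin.succ 0 := rfl

private lemma weylPart_eq (X : Fin 2 → Fin 2 → Fin 2 → Fin 2 → ℂ) (A B C D : Fin 2) :
    weylPart X A B C D = (1 / 24) *
      (X A B C D + X A B D C + (X A C B D + X A C D B + (X A D C B + X A D B C)) +
      (X B A C D + X B A D C + (X B C A D + X B C D A + (X B D C A + X B D A C)) +
        (X C B A D + X C B D A + (X C A B D + X C A D B + (X C D A B + X C D B A)) +
          (X D B C A + X D B A C + (X D C B A + X D C A B + (X D A C B + X D A B C)))))) := by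
  rw [weylPart]
  congr 1
  simp only [← Equiv.Perm.decomposeFin.symm.sum_comp, Fintype.sum_prod_type]
  simp only [finAux1, finAux2, finAux3, finAux4, finAux5, finAux6,
    Fin.sum_univ_succ, Fin.sum_univ_zero, Finset.univ_unique, Finset.sum_singleton,
    Equiv.Perm.decomposeFin_symm_apply_zero, Equiv.Perm.decomposeFin_symm_apply_succ]
  simp only [Equiv.swap_apply_def]
  norm_num [Fin.ext_iff, Fin.succ]

set_option maxHeartbeats 1000000 in
/-- Decomposition of the reduced curvature spinor of a metric (not necessarily
torsion-free) connection:  if `X_{ABCD} = X_{BACD} = X_{ABDC}`, then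
`X_{ABCD} = Ψ_{ABCD} + Λ(ε_{AC}ε_{BD} + ε_{AD}ε_{BC})
  + (1/2)ε_{A(C}H_{D)B} + (1/2)ε_{B(C}H_{D)A}`, and `H` is symmetric. -/
theorem curvature_spinor_decomposition (X : Fin 2 → Fin 2 → Fin 2 → Fin 2 → ℂ)
    (hsym₁ : ∀ A B C D, X A B C D = X B A C D)
    (hsym₂ : ∀ A B C D, X A B C D = X A B D C) :
    (∀ A B C D,
      X A B C D
        = weylPart X A B C D
          + lambdaPart X * (epsSpinor A C * epsSpinor B D + epsSpinor A D * epsSpinor B C)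
          + (1 / 4) * (epsSpinor A C * hPart X D B + epsSpinor A D * hPart X C B)
          + (1 / 4) * (epsSpinor B C * hPart X D A + epsSpinor B D * hPart X C A)) ∧
    (∀ B C, hPart X B C = hPart X C B) := by
  have h1 : ∀ C D, X 1 0 C D = X 0 1 C D := fun C D => hsym₁ 1 0 C D
  have h2 : ∀ A B, X A B 1 0 = X A B 0 1 := fun A B => hsym₂ A B 1 0
  constructor
  · intro A B C D
    fin_cases A <;> fin_cases B <;> fin_cases C <;> fin_cases D <;>
      · rw [weylPart_eq]
        simp only [Fin.mk_zero, Fin.mk_one, lambdaPart, hPart, Fin.sum_univ_two,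
          eps00, eps01, eps10, eps11, h1, h2]
        ring
  · intro B C
    fin_cases B <;> fin_cases C <;>
      · simp only [Fin.mk_zero, Fin.mk_one, hPart, Fin.sum_univ_two,
          eps00, eps01, eps10, eps11, h1, h2]
        try ring
end
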